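/- Let P = conv(S) + cone(R) with S, R finite and S nonempty. If 0 ∈ P, then P equals the polar of Q, where Q = {z : 1 + ⟪v, z⟫ ≥ 0 for all v ∈ S, ⟪r, z⟫ ≥ 0 for all r ∈ R}. -/

import Mathlib

open RealInnerProductSpace Pointwise

noncomputable def polarP {n : ℕ} (P : Set (EuclideanSpace ℝ (Fin n))) :
    Set (EuclideanSpace ℝ (Fin n)) :=
  {z | ∀ x ∈ P, 1 + ⟪z, x⟫ ≥ 0}

noncomputable def coneOf {n : ℕ} (R : Finset (EuclideanSpace ℝ (Fin n))) :
    Set (EuclideanSpace ℝ (Fin n)) :=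
  {x | ∃ μ : EuclideanSpace ℝ (Fin n) → ℝ, (∀ r, 0 ≤ μ r) ∧ x = ∑ r ∈ R, μ r • r}

section Helpers

open Topology

variable {n : ℕ}


lemma zero_mem_coneOf (R : Finset (EuclideanSpace ℝ (Fin n))) : (0 : EuclideanSpace ℝ (Fin n)) ∈ coneOf R :=
  ⟨0, fun _ => le_refl 0, by simp⟩

lemma coneOf_mono {T R : Finset (EuclideanSpace ℝ (Fin n))} (h : T ⊆ R) : coneOf T ⊆ coneOf R := by
  classical
  rintro x ⟨μ, hμ, rfl⟩
  refine ⟨fun r => if r ∈ T then μ r else 0, fun r => by dsimp only; split <;> [exact hμ r; rfl], ?_⟩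
  simp only [ite_smul, zero_smul, Finset.sum_ite_mem, Finset.inter_eq_right.mpr h]

lemma convex_coneOf (R : Finset (EuclideanSpace ℝ (Fin n))) : Convex ℝ (coneOf R) := by
  rintro x ⟨μ, hμ, rfl⟩ y ⟨ν, hν, rfl⟩ a b ha hb _
  refine ⟨fun r => a * μ r + b * ν r, fun r => add_nonneg (mul_nonneg ha (hμ r)) (mul_nonneg hb (hν r)), ?_⟩
  simp [Finset.smul_sum, Finset.sum_add_distrib, add_smul, mul_smul]

lemma smul_mem_coneOf {R : Finset (EuclideanSpace ℝ (Fin n))} {x : EuclideanSpace ℝ (Fin n)}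
    {t : ℝ} (ht : 0 ≤ t) (hx : x ∈ coneOf R) : t • x ∈ coneOf R := by
  obtain ⟨μ, hμ, rfl⟩ := hx
  exact ⟨fun r => t * μ r, fun r => mul_nonneg ht (hμ r), by simp [Finset.smul_sum, mul_smul]⟩


lemma isClosed_coneOf_linIndep (T : Finset (EuclideanSpace ℝ (Fin n)))
    (h : LinearIndependent ℝ ((↑) : ↑T → EuclideanSpace ℝ (Fin n))) :
    IsClosed (coneOf T) := by
  classical
  let φ : (↑T → ℝ) →ₗ[ℝ] EuclideanSpace ℝ (Fin n) :=
    { toFun := fun ν => ∑ t : ↑T, ν t • (t : EuclideanSpace ℝ (Fin n))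
      map_add' := fun a b => by simp [add_smul, Finset.sum_add_distrib]
      map_smul' := fun c a => by simp [Finset.smul_sum, mul_smul] }
  have hinj : Function.Injective φ := by
    rw [← LinearMap.ker_eq_bot, LinearMap.ker_eq_bot']
    intro ν hν
    have := Fintype.linearIndependent_iff.mp h ν hν
    funext t; exact this t
  have hemb : IsClosedEmbedding φ := LinearMap.isClosedEmbedding_of_injective
    (LinearMap.ker_eq_bot.mpr hinj)
  have hset : IsClosed {ν : ↑T → ℝ | ∀ t, 0 ≤ ν t} := by
    have : {ν : ↑T → ℝ | ∀ t, 0 ≤ ν t} = ⋂ t, {ν | 0 ≤ ν t} := by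
      ext ν; simp [Set.mem_iInter]
    rw [this]
    exact isClosed_iInter fun t => isClosed_le continuous_const (continuous_apply t)
  have himg : coneOf T = φ '' {ν : ↑T → ℝ | ∀ t, 0 ≤ ν t} := by
    ext x
    constructor
    · rintro ⟨μ, hμ, rfl⟩
      refine ⟨fun t => μ t, fun t => hμ t, ?_⟩
      show ∑ t : ↑T, μ t • (t : EuclideanSpace ℝ (Fin n)) = _
      rw [← Finset.sum_attach T (fun r => μ r • r)]
      rfl
    · rintro ⟨ν, hν, rfl⟩
      refine ⟨fun r => if h : r ∈ T then ν ⟨r, h⟩ else 0, fun r => by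
        dsimp only; split <;> [exact hν _; rfl], ?_⟩
      show φ ν = _
      rw [← Finset.sum_attach T (fun r => (if h : r ∈ T then ν ⟨r, h⟩ else 0) • r)]
      simp [φ]
  rw [himg]
  exact hemb.isClosedMap _ hset


lemma cone_caratheodory (k : ℕ) :
    ∀ (R : Finset (EuclideanSpace ℝ (Fin n))) (μ : EuclideanSpace ℝ (Fin n) → ℝ),
      (∀ r, 0 ≤ μ r) → ((R.filter fun r => μ r ≠ 0).card ≤ k) →
      ∃ T, T ⊆ R ∧ LinearIndependent ℝ ((↑) : ↑T → EuclideanSpace ℝ (Fin n)) ∧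
        (∑ r ∈ R, μ r • r) ∈ coneOf T := by
  classical
  induction k with
  | zero =>
    intro R μ hμ hcard
    have hF : (R.filter fun r => μ r ≠ 0) = ∅ := Finset.card_eq_zero.mp (Nat.le_zero.mp hcard)
    refine ⟨∅, Finset.empty_subset R, linearIndependent_empty_type, ?_⟩
    have : ∑ r ∈ R, μ r • r = 0 := by
      apply Finset.sum_eq_zero
      intro r hr
      have : μ r = 0 := by
        by_contra h
        have : r ∈ R.filter fun r => μ r ≠ 0 := Finset.mem_filter.mpr ⟨hr, h⟩
        simp [hF] at this
      simp [this]
    rw [this]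
    exact ⟨0, fun _ => le_refl 0, by simp⟩
  | succ k IH =>
    intro R μ hμ hcard
    set F := R.filter fun r => μ r ≠ 0 with hF
    by_cases hdep : LinearIndependent ℝ ((↑) : ↑F → EuclideanSpace ℝ (Fin n))
    · refine ⟨F, Finset.filter_subset _ _, hdep, ?_⟩
      refine ⟨μ, hμ, ?_⟩
      rw [Finset.sum_filter_of_ne]
      intro r _ h hμr
      exact h (by simp [hμr] at *)
    · obtain ⟨g, hg0, i, hgi⟩ := Fintype.not_linearIndependent_iff.mp hdep
      obtain ⟨c, hcF, hcsum, r0, hr0F, hr0pos⟩ :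
          ∃ c : EuclideanSpace ℝ (Fin n) → ℝ, (∀ r, r ∉ F → c r = 0) ∧
            (∑ r ∈ F, c r • r = 0) ∧ ∃ r0 ∈ F, 0 < c r0 := by
        have hsum : ∀ (s : ℝ), ∑ r ∈ F, (fun r => if h : r ∈ F then s * g ⟨r, h⟩ else 0) r • r
            = s • (0 : EuclideanSpace ℝ (Fin n)) := by
          intro s
          rw [← Finset.sum_attach F (fun r => (if h : r ∈ F then s * g ⟨r, h⟩ else 0) • r)]
          rw [← hg0, Finset.smul_sum]
          exact Finset.sum_congr rfl fun t _ => by simp [t.2, mul_smul]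
        rcases hgi.lt_or_gt with h | h
        · refine ⟨fun r => if h : r ∈ F then (-1 : ℝ) * g ⟨r, h⟩ else 0,
            fun r hr => by simp [hr], by simpa using hsum (-1), i, i.2, by simp [i.2]; linarith⟩
        · refine ⟨fun r => if h : r ∈ F then (1 : ℝ) * g ⟨r, h⟩ else 0,
            fun r hr => by simp [hr], by simpa using hsum 1, i, i.2, by simp [i.2]; linarith⟩
      set F' := F.filter fun r => 0 < c r with hF'
      have hF'ne : F'.Nonempty := ⟨r0, Finset.mem_filter.mpr ⟨hr0F, hr0pos⟩⟩
      set t := F'.inf' hF'ne fun r => μ r / c r with ht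
      have htnn : 0 ≤ t := by
        apply Finset.le_inf'
        intro b hb
        exact div_nonneg (hμ b) (le_of_lt (Finset.mem_filter.mp hb).2)
      obtain ⟨r1, hr1, hr1t⟩ := Finset.exists_mem_eq_inf' hF'ne fun r => μ r / c r
      have hr1F : r1 ∈ F := (Finset.mem_filter.mp hr1).1
      have hr1c : 0 < c r1 := (Finset.mem_filter.mp hr1).2
      set μ' := fun r => μ r - t * c r with hμ'
      have hμ'nn : ∀ r, 0 ≤ μ' r := by
        intro r
        by_cases hc : 0 < c r
        · have hrF : r ∈ F := by
            by_contra h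
            rw [hcF r h] at hc; exact lt_irrefl 0 hc
          have : t ≤ μ r / c r := Finset.inf'_le _ (Finset.mem_filter.mpr ⟨hrF, hc⟩)
          have := (le_div_iff₀ hc).mp this
          simp only [hμ']; linarith
        · push_neg at hc
          have : t * c r ≤ 0 := mul_nonpos_of_nonneg_of_nonpos htnn hc
          have := hμ r
          simp only [hμ']; linarith
      have hsum' : ∑ r ∈ R, μ' r • r = ∑ r ∈ R, μ r • r := by
        have hcR : ∑ r ∈ R, c r • r = 0 := by
          rw [← hcsum]
          symm
          apply Finset.sum_subset (Finset.filter_subset _ _)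
          intro r hrR hrF
          rw [hcF r hrF, zero_smul]
        calc ∑ r ∈ R, μ' r • r = ∑ r ∈ R, (μ r • r - t • (c r • r)) := by
              apply Finset.sum_congr rfl
              intro r _
              simp only [hμ', sub_smul, mul_smul]
          _ = ∑ r ∈ R, μ r • r - t • ∑ r ∈ R, c r • r := by
              rw [Finset.sum_sub_distrib, Finset.smul_sum]
          _ = ∑ r ∈ R, μ r • r := by rw [hcR, smul_zero, sub_zero]
      have hsupp : (R.filter fun r => μ' r ≠ 0) ⊆ F.erase r1 := by
        intro r hr
        obtain ⟨hrR, hrne⟩ := Finset.mem_filter.mp hr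
        have hrF : r ∈ F := by
          by_contra h
          have h1 : μ r = 0 := by
            by_contra h2
            exact h (Finset.mem_filter.mpr ⟨hrR, h2⟩)
          have h2 : c r = 0 := hcF r h
          apply hrne
          simp [hμ', h1, h2]
        refine Finset.mem_erase.mpr ⟨?_, hrF⟩
        rintro rfl
        apply hrne
        show μ r - t * c r = 0
        rw [ht, hr1t, div_mul_cancel₀ _ (ne_of_gt hr1c), sub_self]
      have hcard' : (R.filter fun r => μ' r ≠ 0).card ≤ k := by
        have h1 := Finset.card_le_card hsupp
        have h2 : (F.erase r1).card = F.card - 1 := Finset.card_erase_of_mem hr1F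
        have h3 : 1 ≤ F.card := Finset.card_pos.mpr ⟨r1, hr1F⟩
        omega
      obtain ⟨T, hT, hTli, hTmem⟩ := IH R μ' hμ'nn hcard'
      exact ⟨T, hT, hTli, by rwa [hsum'] at hTmem⟩


lemma zero_mem_coneOf' (R : Finset (EuclideanSpace ℝ (Fin n))) :
    (0 : EuclideanSpace ℝ (Fin n)) ∈ coneOf R :=
  ⟨0, fun _ => le_refl 0, by simp⟩

lemma mem_coneOf_self' {R : Finset (EuclideanSpace ℝ (Fin n))} {r : EuclideanSpace ℝ (Fin n)}
    (hr : r ∈ R) : r ∈ coneOf R := by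
  classical
  refine ⟨fun r' => if r' = r then 1 else 0, fun r' => by dsimp only; split <;> norm_num, ?_⟩
  simp [ite_smul, Finset.sum_ite_eq', hr]

lemma smul_mem_coneOf' {R : Finset (EuclideanSpace ℝ (Fin n))} {x : EuclideanSpace ℝ (Fin n)}
    {t : ℝ} (ht : 0 ≤ t) (hx : x ∈ coneOf R) : t • x ∈ coneOf R := by
  obtain ⟨μ, hμ, rfl⟩ := hx
  exact ⟨fun r => t * μ r, fun r => mul_nonneg ht (hμ r), by simp [Finset.smul_sum, mul_smul]⟩

lemma convex_coneOf' (R : Finset (EuclideanSpace ℝ (Fin n))) : Convex ℝ (coneOf R) := by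
  rintro x ⟨μ, hμ, rfl⟩ y ⟨ν, hν, rfl⟩ a b ha hb _
  refine ⟨fun r => a * μ r + b * ν r,
    fun r => add_nonneg (mul_nonneg ha (hμ r)) (mul_nonneg hb (hν r)), ?_⟩
  simp [Finset.smul_sum, Finset.sum_add_distrib, add_smul, mul_smul]


lemma isClosed_coneOf' (R : Finset (EuclideanSpace ℝ (Fin n))) : IsClosed (coneOf R) := by
  classical
  have heq : coneOf R = ⋃ T ∈ (R.powerset.filter fun T : Finset (EuclideanSpace ℝ (Fin n)) =>
      LinearIndependent ℝ ((↑) : ↑T → EuclideanSpace ℝ (Fin n))), coneOf T := by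
    apply Set.eq_of_subset_of_subset
    · rintro x ⟨μ, hμ, rfl⟩
      obtain ⟨T, hT, hli, hmem⟩ := cone_caratheodory _ R μ hμ le_rfl
      exact Set.mem_biUnion (Finset.mem_filter.mpr ⟨Finset.mem_powerset.mpr hT, hli⟩) hmem
    · exact Set.iUnion₂_subset fun T hT =>
        coneOf_mono (Finset.mem_powerset.mp (Finset.mem_filter.mp hT).1)
  rw [heq]
  exact Set.Finite.isClosed_biUnion (Finset.finite_toSet _) fun T hT =>
    isClosed_coneOf_linIndep T (Finset.mem_filter.mp hT).2

end Helpers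

theorem stmt11 {n : ℕ} (S R : Finset (EuclideanSpace ℝ (Fin n))) (hS : S.Nonempty)
    (P : Set (EuclideanSpace ℝ (Fin n)))
    (hP : P = convexHull ℝ (S : Set (EuclideanSpace ℝ (Fin n))) + coneOf R)
    (h0 : (0 : EuclideanSpace ℝ (Fin n)) ∈ P) :
    P = polarP {z | (∀ v ∈ S, 1 + ⟪v, z⟫ ≥ 0) ∧ ∀ r ∈ R, ⟪r, z⟫ ≥ 0} := by
  classical
  have hPc : IsClosed P := by
    rw [hP]
    exact IsClosed.add_left_of_isCompact (isClosed_coneOf' R)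
      (S.finite_toSet.isCompact_convexHull ℝ)
  apply Set.eq_of_subset_of_subset
  · -- P ⊆ polar Q
    intro x hx
    rw [hP] at hx
    obtain ⟨s, hs, c, hc, rfl⟩ := hx
    intro q hq
    obtain ⟨hqS, hqR⟩ := hq
    have h1 : 1 + ⟪s, q⟫ ≥ 0 := by
      have hconv : Convex ℝ {y : EuclideanSpace ℝ (Fin n) | -1 ≤ ⟪y, q⟫} := by
        exact convex_halfSpace_ge
          ⟨fun a b => inner_add_left a b q, fun c a => real_inner_smul_left a q c⟩ (-1)
      have hsub : (S : Set (EuclideanSpace ℝ (Fin n))) ⊆ {y | -1 ≤ ⟪y, q⟫} := by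
        intro v hv
        have := hqS v hv
        simp only [Set.mem_setOf_eq]; linarith
      have := convexHull_min hsub hconv hs
      simp only [Set.mem_setOf_eq] at this; linarith
    have h2 : ⟪c, q⟫ ≥ 0 := by
      obtain ⟨μ, hμ, rfl⟩ := hc
      rw [sum_inner]
      apply Finset.sum_nonneg
      intro r hr
      rw [real_inner_smul_left]
      exact mul_nonneg (hμ r) (hqR r hr)
    show (1 : ℝ) + ⟪s + c, q⟫ ≥ 0
    rw [inner_add_left]; linarith
  · -- polar Q ⊆ P
    intro x hx
    by_contra hxP
    have hPconv : Convex ℝ P := by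
      rw [hP]; exact (convex_convexHull ℝ _).add (convex_coneOf' R)
    obtain ⟨f, u, hfP, hfx⟩ := geometric_hahn_banach_closed_point hPconv hPc hxP
    have hu : 0 < u := by have := hfP 0 h0; rwa [map_zero] at this
    set z := (InnerProductSpace.toDual ℝ (EuclideanSpace ℝ (Fin n))).symm f with hz
    have hzf : ∀ y, ⟪z, y⟫ = f y := fun y =>
      InnerProductSpace.toDual_symm_apply
    set w : EuclideanSpace ℝ (Fin n) := -(u⁻¹ • z) with hw
    obtain ⟨s0, hs0⟩ := hS
    have hwS : ∀ v ∈ S, 1 + ⟪v, w⟫ ≥ 0 := by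
      intro v hv
      have hvP : v ∈ P := by
        rw [hP]
        exact ⟨v, subset_convexHull ℝ _ hv, 0, zero_mem_coneOf' R, add_zero v⟩
      have hfv : f v < u := hfP v hvP
      have : ⟪v, w⟫ = -(u⁻¹ * f v) := by
        rw [real_inner_comm, hw, inner_neg_left, real_inner_smul_left, hzf]
      rw [this]
      have : u⁻¹ * f v < 1 := by
        rw [← inv_mul_cancel₀ (ne_of_gt hu)]
        exact mul_lt_mul_of_pos_left hfv (inv_pos.mpr hu)
      linarith
    have hwR : ∀ r ∈ R, ⟪r, w⟫ ≥ 0 := by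
      intro r hr
      have hfr : f r ≤ 0 := by
        by_contra hpos
        push_neg at hpos
        set t : ℝ := (u - f s0) / f r + 1 with htdef
        have hfs0 : f s0 < u := by
          apply hfP
          rw [hP]
          exact ⟨s0, subset_convexHull ℝ _ hs0, 0, zero_mem_coneOf' R, add_zero s0⟩
        have htpos : 0 < t := by
          rw [htdef]
          have : 0 < (u - f s0) / f r := div_pos (by linarith) hpos
          linarith
        have hmem : s0 + t • r ∈ P := by
          rw [hP]
          exact ⟨s0, subset_convexHull ℝ _ hs0,
            t • r, smul_mem_coneOf' (le_of_lt htpos) (mem_coneOf_self' hr), rfl⟩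
        have := hfP _ hmem
        rw [map_add, map_smul] at this
        have ht : t * f r = u - f s0 + f r := by
          rw [htdef]; field_simp
        simp only [smul_eq_mul] at this
        rw [ht] at this
        linarith
      have : ⟪r, w⟫ = -(u⁻¹ * f r) := by
        rw [real_inner_comm, hw, inner_neg_left, real_inner_smul_left, hzf]
      rw [this]
      have : u⁻¹ * f r ≤ 0 := mul_nonpos_of_nonneg_of_nonpos (inv_pos.mpr hu).le hfr
      linarith
    have hwQ : w ∈ {z | (∀ v ∈ S, 1 + ⟪v, z⟫ ≥ 0) ∧ ∀ r ∈ R, ⟪r, z⟫ ≥ 0} := ⟨hwS, hwR⟩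
    have := hx w hwQ
    have hxw : ⟪x, w⟫ = -(u⁻¹ * f x) := by
      rw [real_inner_comm, hw, inner_neg_left, real_inner_smul_left, hzf]
    rw [hxw] at this
    have : 1 < u⁻¹ * f x := by
      rw [← inv_mul_cancel₀ (ne_of_gt hu)]
      exact mul_lt_mul_of_pos_left hfx (inv_pos.mpr hu)
    linarith
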